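/- Let U = {u^1,...,u^i} and V = {v^1,...,v^j} be finite subsets of the Euclidean unit sphere S^{n-1} in R^n, and suppose there exist positive scalars λ_1,...,λ_i and μ_1,...,μ_j with Σ_k λ_k u^k = 0 and Σ_l μ_l v^l = 0. Then there exist indices k ∈ [i] and l ∈ [j] such that ‖u^k + v^l‖_2 ≥ √2. -/

import Mathlib

open Finset

theorem additive_caratheodory_two_sets {n : ℕ}
    (U V : Finset (EuclideanSpace ℝ (Fin n)))
    (hUne : U.Nonempty) (hVne : V.Nonempty)
    (hU : ∀ u ∈ U, ‖u‖ = 1) (hV : ∀ v ∈ V, ‖v‖ = 1)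
    (lam mu : EuclideanSpace ℝ (Fin n) → ℝ)
    (hlam : ∀ u ∈ U, 0 < lam u) (hmu : ∀ v ∈ V, 0 < mu v)
    (hU0 : ∑ u ∈ U, lam u • u = 0) (hV0 : ∑ v ∈ V, mu v • v = 0) :
    ∃ u ∈ U, ∃ v ∈ V, Real.sqrt 2 ≤ ‖u + v‖ := by
  -- There exist u, v with nonnegative inner product
  have key : ∃ u ∈ U, ∃ v ∈ V, (0:ℝ) ≤ inner ℝ u v := by
    by_contra h
    push_neg at h
    have hzero : (0 : ℝ) = ∑ u ∈ U, ∑ v ∈ V, lam u * mu v * inner ℝ u v := by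
      have : (inner ℝ (∑ u ∈ U, lam u • u) (∑ v ∈ V, mu v • v) : ℝ) = 0 := by
        rw [hU0, hV0, inner_zero_left]
      rw [inner_sum] at this
      simp only [sum_inner, inner_smul_left, inner_smul_right, RCLike.inner_apply,
        map_sum, conj_trivial] at this
      rw [← this, Finset.sum_comm]
      apply Finset.sum_congr rfl
      intro v hv
      rw [Finset.mul_sum]
      apply Finset.sum_congr rfl
      intro u hu
      ring
    have hneg : ∑ u ∈ U, ∑ v ∈ V, lam u * mu v * inner ℝ u v < 0 := by
      apply Finset.sum_neg
      · intro u hu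
        apply Finset.sum_neg
        · intro v hv
          exact mul_neg_of_pos_of_neg (mul_pos (hlam u hu) (hmu v hv)) (h u hu v hv)
        · exact hVne
      · exact hUne
    linarith
  obtain ⟨u, hu, v, hv, hinner⟩ := key
  refine ⟨u, hu, v, hv, ?_⟩
  have hnorm : ‖u + v‖ ^ 2 = 2 + 2 * inner ℝ u v := by
    rw [norm_add_sq_real, hU u hu, hV v hv]
    ring
  have h2 : (2 : ℝ) ≤ ‖u + v‖ ^ 2 := by linarith
  calc Real.sqrt 2 ≤ Real.sqrt (‖u + v‖ ^ 2) := Real.sqrt_le_sqrt h2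
    _ = ‖u + v‖ := Real.sqrt_sq (norm_nonneg _)
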